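/- Let L be a substructural logic and let P and Q be two Frege systems for L. Then there exists a constant c such that for every formula φ and every P-proof π of φ, there exists a Q-proof π' of φ with λ(π') ≤ c · λ(π). -/

import Mathlib

inductive FLForm : Type
  | var : Nat → FLForm
  | one : FLForm
  | zero : FLForm
  | conj : FLForm → FLForm → FLForm
  | disj : FLForm → FLForm → FLForm
  | fuse : FLForm → FLForm → FLForm
  | ldiv : FLForm → FLForm → FLForm
  | rdiv : FLForm → FLForm → FLForm
  deriving DecidableEq

/-- The sequent calculus `FL` augmented with the initial sequents `⇒ γ`, `γ ∈ H`.
`Υ ⊢_FL φ` is `FLfrom Υ [] (some φ)`.  `FLForm.rdiv B A` denotes `B / A`. -/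
inductive FLfrom (H : Set FLForm) : List FLForm → Option FLForm → Prop
  | hyp {A : FLForm} : A ∈ H → FLfrom H [] (some A)
  | id (A : FLForm) : FLfrom H [A] (some A)
  | oneR : FLfrom H [] (some FLForm.one)
  | zeroL : FLfrom H [FLForm.zero] none
  | cut {X Y Z : List FLForm} {D : Option FLForm} {A : FLForm} :
      FLfrom H X (some A) → FLfrom H (Y ++ A :: Z) D → FLfrom H (Y ++ X ++ Z) D
  | oneW {X Y : List FLForm} {D : Option FLForm} :
      FLfrom H (X ++ Y) D → FLfrom H (X ++ FLForm.one :: Y) D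
  | zeroW {X : List FLForm} : FLfrom H X none → FLfrom H X (some FLForm.zero)
  | conjL1 {X Y : List FLForm} {D : Option FLForm} {A : FLForm} (B : FLForm) :
      FLfrom H (X ++ A :: Y) D → FLfrom H (X ++ FLForm.conj A B :: Y) D
  | conjL2 {X Y : List FLForm} {D : Option FLForm} {B : FLForm} (A : FLForm) :
      FLfrom H (X ++ B :: Y) D → FLfrom H (X ++ FLForm.conj A B :: Y) D
  | conjR {X : List FLForm} {A B : FLForm} :
      FLfrom H X (some A) → FLfrom H X (some B) → FLfrom H X (some (FLForm.conj A B))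
  | disjL {X Y : List FLForm} {D : Option FLForm} {A B : FLForm} :
      FLfrom H (X ++ A :: Y) D → FLfrom H (X ++ B :: Y) D →
      FLfrom H (X ++ FLForm.disj A B :: Y) D
  | disjR1 {X : List FLForm} {A : FLForm} (B : FLForm) :
      FLfrom H X (some A) → FLfrom H X (some (FLForm.disj A B))
  | disjR2 {X : List FLForm} {B : FLForm} (A : FLForm) :
      FLfrom H X (some B) → FLfrom H X (some (FLForm.disj A B))
  | fuseL {X Y : List FLForm} {D : Option FLForm} {A B : FLForm} :
      FLfrom H (X ++ A :: B :: Y) D → FLfrom H (X ++ FLForm.fuse A B :: Y) D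
  | fuseR {X Y : List FLForm} {A B : FLForm} :
      FLfrom H X (some A) → FLfrom H Y (some B) → FLfrom H (X ++ Y) (some (FLForm.fuse A B))
  | ldivL {X Y Z : List FLForm} {D : Option FLForm} {A B : FLForm} :
      FLfrom H X (some A) → FLfrom H (Y ++ B :: Z) D →
      FLfrom H (Y ++ X ++ FLForm.ldiv A B :: Z) D
  | ldivR {X : List FLForm} {A B : FLForm} :
      FLfrom H (A :: X) (some B) → FLfrom H X (some (FLForm.ldiv A B))
  | rdivL {X Y Z : List FLForm} {D : Option FLForm} {A B : FLForm} :
      FLfrom H X (some A) → FLfrom H (Y ++ B :: Z) D →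
      FLfrom H (Y ++ FLForm.rdiv B A :: (X ++ Z)) D
  | rdivR {X : List FLForm} {A B : FLForm} :
      FLfrom H (X ++ [A]) (some B) → FLfrom H X (some (FLForm.rdiv B A))

def FLForm.subst (f : Nat → FLForm) : FLForm → FLForm
  | FLForm.var n => f n
  | FLForm.one => FLForm.one
  | FLForm.zero => FLForm.zero
  | FLForm.conj a b => FLForm.conj (a.subst f) (b.subst f)
  | FLForm.disj a b => FLForm.disj (a.subst f) (b.subst f)
  | FLForm.fuse a b => FLForm.fuse (a.subst f) (b.subst f)
  | FLForm.ldiv a b => FLForm.ldiv (a.subst f) (b.subst f)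
  | FLForm.rdiv a b => FLForm.rdiv (a.subst f) (b.subst f)

/-- A substructural logic over `FL`: a set of `L*`-formulas containing all
`FL`-provable formulas, closed under substitution and under `⊢_FL`. -/
structure IsSubstructural (L : Set FLForm) : Prop where
  flSub : ∀ A : FLForm, FLfrom ∅ [] (some A) → A ∈ L
  substClosed : ∀ (f : Nat → FLForm), ∀ A ∈ L, FLForm.subst f A ∈ L
  derClosed : ∀ A : FLForm, FLfrom L [] (some A) → A ∈ L

/-- `π` is a (dag-like) derivation over the step relation `Step` from the
hypotheses `Hyp`: every line is a hypothesis or follows from earlier lines by an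
instance of `Step`.  The number of proof-lines `λ(π)` is `π.length`. -/
def IsDeriv {σ : Type} (Step : List σ → σ → Prop) (Hyp : Set σ) (π : List σ) : Prop :=
  ∀ i : Fin π.length, π.get i ∈ Hyp ∨
    ∃ prems : List σ, Step prems (π.get i) ∧
      ∀ p ∈ prems, ∃ j : Fin π.length, (j : Nat) < (i : Nat) ∧ π.get j = p

abbrev FLRule : Type := List FLForm × FLForm

def FLRuleStep (rules : List FLRule) (prems : List FLForm) (conc : FLForm) : Prop :=
  ∃ r ∈ rules, ∃ f : Nat → FLForm, prems = r.1.map (FLForm.subst f) ∧ conc = FLForm.subst f r.2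

/-- `π` is a proof of `A` from hypotheses `H` in the inference system given by `rules`;
`λ(π) = π.length`. -/
def FLFregeProof (rules : List FLRule) (H : Set FLForm) (π : List FLForm) (A : FLForm) : Prop :=
  IsDeriv (FLRuleStep rules) H π ∧ π.getLast? = some A

/-- `rules` is a Frege system for the substructural logic `L` (with respect to `L`
itself): finitely many rules, sound, strongly complete, and every rule is
`L`-standard, where `Υ ⊢_L φ` is `Υ ∪ L ⊢_FL φ`. -/
structure IsFregeFor (L : Set FLForm) (rules : List FLRule) : Prop where
  sound : ∀ A : FLForm, (∃ π : List FLForm, FLFregeProof rules ∅ π A) → A ∈ L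
  complete : ∀ (G : List FLForm) (A : FLForm),
    FLfrom ({x | x ∈ G} ∪ L) [] (some A) →
    ∃ π : List FLForm, FLFregeProof rules {x | x ∈ G} π A
  standard : ∀ r ∈ rules, FLfrom ({x | x ∈ r.1} ∪ L) [] (some r.2)

lemma FLForm.subst_subst (f g : Nat → FLForm) (A : FLForm) :
    (A.subst g).subst f = A.subst (fun n => (g n).subst f) := by
  induction A <;> simp [FLForm.subst, *]

lemma FLRuleStep_subst {R : List FLRule} (f : Nat → FLForm) {ps : List FLForm} {c : FLForm}
    (h : FLRuleStep R ps c) :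
    FLRuleStep R (ps.map (FLForm.subst f)) (FLForm.subst f c) := by
  obtain ⟨r, hr, g, h1, h2⟩ := h
  refine ⟨r, hr, fun n => (g n).subst f, ?_, ?_⟩
  · subst h1; rw [List.map_map]; apply List.map_congr_left
    intro a _; exact FLForm.subst_subst f g a
  · subst h2; exact FLForm.subst_subst f g r.2

lemma getLast?_map_eq {α β : Type} (g : α → β) {l : List α} {a : α}
    (h : l.getLast? = some a) : (l.map g).getLast? = some (g a) := by
  rw [List.getLast?_eq_getElem?] at h ⊢
  simp only [List.length_map, List.getElem?_map, h, Option.map_some]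

/-- Appending a substituted block of a derivation, replacing hypothesis lines by
a dummy `d` that follows from a premise-free rule; hypothesis instances must be
available in the prefix `B`. -/
lemma append_block {S : List FLForm → FLForm → Prop}
    (hS : ∀ (f : Nat → FLForm) (ps : List FLForm) (c : FLForm),
      S ps c → S (ps.map (FLForm.subst f)) (FLForm.subst f c))
    {d : FLForm} (hd : S [] d)
    {B : List FLForm} (hB : IsDeriv S ∅ B)
    (Hl : List FLForm) (f : Nat → FLForm)
    (hH : ∀ h ∈ Hl, FLForm.subst f h ∈ B)
    {ρ : List FLForm} (hρ : IsDeriv S {x | x ∈ Hl} ρ) :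
    IsDeriv S ∅ (B ++ ρ.map (fun x => if x ∈ Hl then d else FLForm.subst f x)) := by
  set g : FLForm → FLForm := fun x => if x ∈ Hl then d else FLForm.subst f x with hg
  intro i
  have hilt : (i : ℕ) < B.length + ρ.length := by
    have := i.isLt; simpa using this
  by_cases hiB : (i : ℕ) < B.length
  · have hget : (B ++ ρ.map g).get i = B.get ⟨i, hiB⟩ := by
      simp only [List.get_eq_getElem]
      exact List.getElem_append_left hiB
    rcases hB ⟨i, hiB⟩ with h | ⟨prems, hs, hpm⟩
    · exact (Set.notMem_empty _ h).elim
    · refine Or.inr ⟨prems, hget ▸ hs, ?_⟩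
      intro p hp
      obtain ⟨j, hj, hje⟩ := hpm p hp
      have hjlt : (j : ℕ) < (B ++ ρ.map g).length := by
        simp; omega
      refine ⟨⟨j, hjlt⟩, hj, ?_⟩
      have : (B ++ ρ.map g).get ⟨j, hjlt⟩ = B.get ⟨j, j.isLt⟩ := by
        simp only [List.get_eq_getElem]
        exact List.getElem_append_left j.isLt
      rw [this]; exact hje
  · push_neg at hiB
    have hk : (i : ℕ) - B.length < ρ.length := by omega
    have hget : (B ++ ρ.map g).get i = g (ρ.get ⟨(i : ℕ) - B.length, hk⟩) := by
      simp only [List.get_eq_getElem]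
      rw [List.getElem_append_right hiB]
      simp
    by_cases hmem : ρ.get ⟨(i : ℕ) - B.length, hk⟩ ∈ Hl
    · refine Or.inr ⟨[], ?_, by simp⟩
      have hgd : g (ρ.get ⟨(i : ℕ) - B.length, hk⟩) = d := if_pos hmem
      rw [hget, hgd]; exact hd
    · rcases hρ ⟨(i : ℕ) - B.length, hk⟩ with h | ⟨prems, hs, hpm⟩
      · exact (hmem h).elim
      · refine Or.inr ⟨prems.map (FLForm.subst f), ?_, ?_⟩
        · have hgd : g (ρ.get ⟨(i : ℕ) - B.length, hk⟩) =
              FLForm.subst f (ρ.get ⟨(i : ℕ) - B.length, hk⟩) := if_neg hmem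
          rw [hget, hgd]; exact hS f prems _ hs
        · intro p hp
          obtain ⟨q, hq, rfl⟩ := List.mem_map.mp hp
          obtain ⟨m, hm, hme⟩ := hpm q hq
          by_cases hqH : ρ.get m ∈ Hl
          · have hmemB : FLForm.subst f q ∈ B := hme ▸ hH _ hqH
            obtain ⟨t, ht, hte⟩ := List.mem_iff_getElem.mp hmemB
            have htlt : t < (B ++ ρ.map g).length := by
              simp only [List.length_append, List.length_map]; omega
            have hlt1 : t < (i : ℕ) := by omega
            refine ⟨⟨t, htlt⟩, hlt1, ?_⟩
            simp only [List.get_eq_getElem]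
            rw [List.getElem_append_left ht]; exact hte
          · have hm' : (m : ℕ) < (i : ℕ) - B.length := hm
            have hmlt : B.length + (m : ℕ) < (B ++ ρ.map g).length := by
              have := m.isLt
              simp only [List.length_append, List.length_map]; omega
            have hlt2 : B.length + (m : ℕ) < (i : ℕ) := by omega
            refine ⟨⟨B.length + (m : ℕ), hmlt⟩, hlt2, ?_⟩
            simp only [List.get_eq_getElem]
            rw [List.getElem_append_right (by omega)]
            simp only [Nat.add_sub_cancel_left, List.getElem_map]
            have : ρ[(m : ℕ)] = ρ.get m := by simp [List.get_eq_getElem]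
            have hgd : g (ρ.get m) = FLForm.subst f (ρ.get m) := if_neg hqH
            rw [this, hgd]
            exact congrArg (FLForm.subst f) hme

theorem statement_11 (L : Set FLForm) (hL : IsSubstructural L)
    (P Q : List FLRule) (hP : IsFregeFor L P) (hQ : IsFregeFor L Q) :
    ∃ c : Nat, ∀ (A : FLForm) (π : List FLForm), FLFregeProof P ∅ π A →
      ∃ πp : List FLForm, FLFregeProof Q ∅ πp A ∧ πp.length ≤ c * π.length := by
  classical
  set S : List FLForm → FLForm → Prop := FLRuleStep Q with hSdef
  have hS : ∀ (f : Nat → FLForm) (ps : List FLForm) (c : FLForm),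
      S ps c → S (ps.map (FLForm.subst f)) (FLForm.subst f c) :=
    fun f ps c h => FLRuleStep_subst f h
  -- a dummy formula derivable by a premise-free rule of Q
  obtain ⟨π1, hπ1⟩ := hQ.complete [] FLForm.one (FLfrom.oneR)
  have hπ1ne : π1 ≠ [] := by
    intro h; rw [h] at hπ1; exact absurd hπ1.2 (by simp)
  have h0lt : 0 < π1.length := List.length_pos_iff.mpr hπ1ne
  obtain ⟨d, hd⟩ : ∃ d, S [] d := by
    rcases hπ1.1 ⟨0, h0lt⟩ with h | ⟨prems, hs, hpm⟩
    · simp at h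
    · have : prems = [] := by
        rw [List.eq_nil_iff_forall_not_mem]
        intro p hp
        obtain ⟨j, hj, -⟩ := hpm p hp
        have hj0 : (j : ℕ) < 0 := hj
        omega
      exact ⟨_, this ▸ hs⟩
  -- gadget proofs
  set v : FLForm := FLForm.var 0 with hv
  obtain ⟨τ1, hτ1⟩ := hQ.complete [v] (FLForm.conj v v)
    (by
      have h : FLfrom ({x | x ∈ [v]} ∪ L) [] (some v) :=
        FLfrom.hyp (Or.inl (by simp))
      exact FLfrom.conjR h h)
  obtain ⟨τ2, hτ2⟩ := hQ.complete [FLForm.conj v v] v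
    (by
      have h : FLfrom ({x | x ∈ [FLForm.conj v v]} ∪ L) [] (some (FLForm.conj v v)) :=
        FLfrom.hyp (Or.inl (by simp))
      have h2 : FLfrom ({x | x ∈ [FLForm.conj v v]} ∪ L)
          ([] ++ FLForm.conj v v :: []) (some v) :=
        FLfrom.conjL1 v (FLfrom.id v)
      have := FLfrom.cut (Y := []) (Z := []) h h2
      simpa using this)
  -- chosen Q-proofs for the rules of P
  set ρ : FLRule → List FLForm := fun r =>
    if h : ∃ π, FLFregeProof Q {x | x ∈ r.1} π r.2 then h.choose else [] with hρdef
  have hρ : ∀ r ∈ P, FLFregeProof Q {x | x ∈ r.1} (ρ r) r.2 := by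
    intro r hr
    have h : ∃ π, FLFregeProof Q {x | x ∈ r.1} π r.2 :=
      hQ.complete r.1 r.2 (hP.standard r hr)
    simpa [hρdef, h] using h.choose_spec
  set K : ℕ := (P.map (fun r => (ρ r).length)).sum with hK
  set G : ℕ := τ1.length + τ2.length with hG
  refine ⟨K + G, ?_⟩
  intro A π hπ
  have hπne : π ≠ [] := by
    intro h; rw [h] at hπ; exact absurd hπ.2 (by simp)
  have hπpos : 0 < π.length := List.length_pos_iff.mpr hπne
  -- main induction: simulate prefixes of π
  have main : ∀ n, n ≤ π.length → ∃ B : List FLForm, IsDeriv S ∅ B ∧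
      (∀ j : Fin π.length, (j : ℕ) < n → π.get j ∈ B) ∧ B.length ≤ K * n := by
    intro n
    induction n with
    | zero =>
        exact fun _ => ⟨[], fun i => absurd i.isLt (by simp),
          fun j h => absurd h (Nat.not_lt_zero _), by simp⟩
    | succ n ih =>
        intro hn1
        obtain ⟨B, hB, havail, hlen⟩ := ih (Nat.le_of_succ_le hn1)
        have hn : n < π.length := hn1
        rcases hπ.1 ⟨n, hn⟩ with h | ⟨prems, hs, hpm⟩
        · simp at h
        · obtain ⟨r, hr, f, hpeq, hceq⟩ := hs
          have hρr := hρ r hr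
          have hH : ∀ x ∈ r.1, FLForm.subst f x ∈ B := by
            intro x hx
            have hmem : FLForm.subst f x ∈ prems := hpeq ▸ List.mem_map_of_mem (f := FLForm.subst f) hx
            obtain ⟨j, hj, hje⟩ := hpm _ hmem
            exact hje ▸ havail j hj
          set g : FLForm → FLForm := fun x => if x ∈ r.1 then d else FLForm.subst f x
            with hgdef
          refine ⟨B ++ (ρ r).map g, append_block hS hd hB r.1 f hH hρr.1, ?_, ?_⟩
          · intro j hj
            rcases Nat.lt_succ_iff_lt_or_eq.mp hj with hjn | hjn
            · exact List.mem_append_left _ (havail j hjn)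
            · have hjget : π.get j = FLForm.subst f r.2 := by
                have : j = (⟨n, hn⟩ : Fin π.length) := Fin.ext hjn
                rw [this]; exact hceq
              by_cases hcm : r.2 ∈ r.1
              · have hmem : FLForm.subst f r.2 ∈ prems :=
                  hpeq ▸ List.mem_map_of_mem (f := FLForm.subst f) hcm
                obtain ⟨j', hj', hje'⟩ := hpm _ hmem
                have hj'n : (j' : ℕ) < n := hj'
                rw [hjget, ← hje']
                exact List.mem_append_left _ (havail j' (by omega))
              · have hmem : r.2 ∈ ρ r := List.mem_of_mem_getLast? hρr.2
                have hmm : g r.2 ∈ (ρ r).map g := List.mem_map_of_mem (f := g) hmem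
                have hgd : g r.2 = FLForm.subst f r.2 := if_neg hcm
                rw [hjget, ← hgd]
                exact List.mem_append_right _ hmm
          · have hle : (ρ r).length ≤ K := by
              refine List.single_le_sum (fun x _ => Nat.zero_le x) _ ?_
              exact List.mem_map_of_mem hr
            simp only [List.length_append, List.length_map]
            calc B.length + (ρ r).length ≤ K * n + K := Nat.add_le_add hlen hle
              _ = K * (n + 1) := by ring
  obtain ⟨B, hB, havail, hlen⟩ := main π.length le_rfl
  -- A is available in B
  have hlast : π.get ⟨π.length - 1, by omega⟩ = A := by
    have h2 := hπ.2
    rw [List.getLast?_eq_getElem?, List.getElem?_eq_getElem (by omega)] at h2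
    simpa using h2
  have hA : A ∈ B := hlast ▸ havail ⟨π.length - 1, by omega⟩ (by omega)
  -- gadget: derive conj A A from A, then A from conj A A
  set f : Nat → FLForm := fun _ => A with hf
  set g1 : FLForm → FLForm := fun x => if x ∈ [v] then d else FLForm.subst f x with hg1
  set g2 : FLForm → FLForm := fun x => if x ∈ [FLForm.conj v v] then d
    else FLForm.subst f x with hg2
  have hH1 : ∀ h ∈ [v], FLForm.subst f h ∈ B := by
    intro h hh; simp at hh; subst hh; simpa [FLForm.subst, hv, hf] using hA
  have hB1 : IsDeriv S ∅ (B ++ τ1.map g1) := append_block hS hd hB [v] f hH1 hτ1.1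
  have hCA : FLForm.conj A A ∈ B ++ τ1.map g1 := by
    have hmem : FLForm.conj v v ∈ τ1 := List.mem_of_mem_getLast? hτ1.2
    have h2 : g1 (FLForm.conj v v) ∈ τ1.map g1 := List.mem_map_of_mem (f := g1) hmem
    have hgd : g1 (FLForm.conj v v) = FLForm.conj A A := by
      have hnm : FLForm.conj v v ∉ [v] := by simp [hv]
      exact if_neg hnm
    refine List.mem_append_right _ ?_
    rw [← hgd]; exact h2
  have hH2 : ∀ h ∈ [FLForm.conj v v], FLForm.subst f h ∈ B ++ τ1.map g1 := by
    intro h hh; simp at hh; subst hh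
    simpa [FLForm.subst, hv, hf] using hCA
  have hB2 : IsDeriv S ∅ ((B ++ τ1.map g1) ++ τ2.map g2) :=
    append_block hS hd hB1 [FLForm.conj v v] f hH2 hτ2.1
  refine ⟨(B ++ τ1.map g1) ++ τ2.map g2, ⟨hB2, ?_⟩, ?_⟩
  · have hτ2ne : (τ2.map g2).getLast? = some (g2 v) := getLast?_map_eq g2 hτ2.2
    have hvn : v ∉ [FLForm.conj v v] := by simp [hv]
    have hg2v : g2 v = A := if_neg hvn
    rw [List.getLast?_append, hτ2ne, hg2v]
    simp
  · simp only [List.length_append, List.length_map]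
    have hG1 : G * 1 ≤ G * π.length := Nat.mul_le_mul_left G hπpos
    calc B.length + τ1.length + τ2.length ≤ K * π.length + G := by
          rw [hG]; omega
      _ ≤ K * π.length + G * π.length := by omega
      _ = (K + G) * π.length := by ring
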